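/- Let 𝔥 be an abelian Lie algebra with nondegenerate symmetric form ⟨·,·⟩ and consider operators α(n) for α ∈ 𝔥, n ∈ ℤ, satisfying the Heisenberg relations [α(m), β(n)] = m⟨α,β⟩δ_{m+n,0}·c with c central acting as 1. Then on the symmetric algebra S(𝔥̂_ℤ⁻) = S(⨁_{n<0} 𝔥 ⊗ tⁿ), with α(−n) (n>0) acting by multiplication and α(n) (n>0) acting as the derivation determined by α(n)·(β ⊗ t^{−m}) = n⟨α,β⟩δ_{n,m}, and α(0) = 0, these operators satisfy the Heisenberg relations, and S(𝔥̂_ℤ⁻) is an irreducible module for the Heisenberg algebra. -/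

import Mathlib

open scoped BigOperators

namespace Stmt11Aux
open MvPolynomial

section
variable {d : ℕ} (B : (Fin d → ℂ) →ₗ[ℂ] (Fin d → ℂ) →ₗ[ℂ] ℂ)

noncomputable def mulElt (α : Fin d → ℂ) (n : ℕ+) : MvPolynomial (Fin d × ℕ+) ℂ :=
  ∑ i, α i • X (i, n)

noncomputable def derOp (α : Fin d → ℂ) (n : ℕ+) :
    Derivation ℂ (MvPolynomial (Fin d × ℕ+) ℂ) (MvPolynomial (Fin d × ℕ+) ℂ) :=
  mkDerivation ℂ (fun v => if n = v.2 then C ((n : ℂ) * B α (Pi.single v.1 1)) else 0)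

@[simp] lemma derOp_X (α : Fin d → ℂ) (n : ℕ+) (i : Fin d) (m : ℕ+) :
    derOp B α n (X (i, m)) = if n = m then C ((n : ℂ) * B α (Pi.single i 1)) else 0 := by
  simp [derOp, mkDerivation_X]

lemma derOp_add (α β : Fin d → ℂ) (n : ℕ+) :
    derOp B (α + β) n = derOp B α n + derOp B β n := by
  apply derivation_ext
  rintro ⟨i, m⟩
  simp only [derOp_X, Derivation.add_apply, map_add, LinearMap.add_apply, mul_add, C_add]
  split <;> simp

lemma derOp_smul (c : ℂ) (α : Fin d → ℂ) (n : ℕ+) :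
    derOp B (c • α) n = c • derOp B α n := by
  apply derivation_ext
  rintro ⟨i, m⟩
  simp only [derOp_X, Derivation.smul_apply, map_smul, LinearMap.smul_apply, smul_eq_mul]
  split
  · rw [smul_eq_C_mul, ← C_mul]; congr 1; ring
  · simp

lemma mulElt_add (α β : Fin d → ℂ) (n : ℕ+) :
    mulElt (α + β) n = mulElt α n + mulElt β n := by
  simp [mulElt, add_smul, Finset.sum_add_distrib]

lemma mulElt_smul (c : ℂ) (α : Fin d → ℂ) (n : ℕ+) :
    mulElt (c • α) n = c • mulElt α n := by
  simp [mulElt, Finset.smul_sum, mul_smul]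

noncomputable def A (α : Fin d → ℂ) (n : ℤ) :
    Module.End ℂ (MvPolynomial (Fin d × ℕ+) ℂ) :=
  if h : 0 < n then (derOp B α ⟨n.toNat, by omega⟩).toLinearMap
  else if h2 : n < 0 then LinearMap.mulLeft ℂ (mulElt α ⟨(-n).toNat, by omega⟩)
  else 0

lemma A_pos (α : Fin d → ℂ) (n : ℕ+) :
    A B α (n : ℤ) = (derOp B α n).toLinearMap := by
  have h : (0:ℤ) < (n:ℤ) := by exact_mod_cast n.pos
  rw [A, dif_pos h]
  congr 1

lemma A_neg (α : Fin d → ℂ) (n : ℕ+) :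
    A B α (-(n : ℤ)) = LinearMap.mulLeft ℂ (mulElt α n) := by
  have hp : (0:ℤ) < (n:ℤ) := by exact_mod_cast n.pos
  have h : ¬ (0:ℤ) < -(n:ℤ) := by omega
  have h2 : -(n:ℤ) < 0 := by omega
  rw [A, dif_neg h, dif_pos h2]
  congr 2
  apply PNat.coe_inj.mp
  simp

lemma A_zero (α : Fin d → ℂ) : A B α 0 = 0 := by
  simp [A]

lemma int_cases (n : ℤ) : n = 0 ∨ (∃ k : ℕ+, n = (k:ℤ)) ∨ (∃ k : ℕ+, n = -(k:ℤ)) := by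
  rcases lt_trichotomy n 0 with h | h | h
  · refine Or.inr (Or.inr ⟨⟨(-n).toNat, by omega⟩, ?_⟩)
    simp; omega
  · exact Or.inl h
  · refine Or.inr (Or.inl ⟨⟨n.toNat, by omega⟩, ?_⟩)
    simp; omega


lemma derOp_comm (α β : Fin d → ℂ) (m n : ℕ+) :
    ⁅derOp B α m, derOp B β n⁆ = 0 := by
  apply derivation_ext
  rintro ⟨i, k⟩
  simp only [Derivation.commutator_apply, derOp_X, Derivation.zero_apply]
  split <;> split <;> simp [derOp]

lemma derOp_mulElt (α β : Fin d → ℂ) (m n : ℕ+) :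
    derOp B α m (mulElt β n) = if m = n then C ((m : ℂ) * B α β) else 0 := by
  have hβ : B α β = ∑ i, β i • B α (Pi.single i 1) := by
    have := LinearMap.pi_apply_eq_sum_univ (B α) β
    rw [this]
    refine Finset.sum_congr rfl fun i _ => ?_
    congr 1
    exact congrArg (B α) (by funext j; simp [Pi.single_apply, eq_comm])
  simp only [mulElt, map_sum, Derivation.map_smul, derOp_X]
  by_cases h : m = n
  · subst h
    simp only [if_pos rfl]
    rw [hβ, Finset.mul_sum, map_sum]
    refine Finset.sum_congr rfl fun i _ => ?_
    rw [smul_eq_C_mul, if_pos trivial, ← C_mul]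
    congr 1
    simp only [smul_eq_mul]
    ring
  · simp [if_neg h, h]

end

section
variable {d : ℕ} (B : (Fin d → ℂ) →ₗ[ℂ] (Fin d → ℂ) →ₗ[ℂ] ℂ)

lemma B_sum (α β : Fin d → ℂ) : B α β = ∑ i, β i * B α (Pi.single i 1) := by
  have := LinearMap.pi_apply_eq_sum_univ (B α) β
  rw [this]
  refine Finset.sum_congr rfl fun i _ => ?_
  rw [smul_eq_mul]
  congr 1
  exact congrArg (B α) (by funext j; simp [Pi.single_apply, eq_comm])

lemma der_mul_bracket (α β : Fin d → ℂ) (m n : ℕ+) :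
    (derOp B α m).toLinearMap * LinearMap.mulLeft ℂ (mulElt β n)
      - LinearMap.mulLeft ℂ (mulElt β n) * (derOp B α m).toLinearMap
    = if m = n then ((m : ℂ) * B α β) • (1 : Module.End ℂ (MvPolynomial (Fin d × ℕ+) ℂ))
      else 0 := by
  refine LinearMap.ext fun p => ?_
  simp only [LinearMap.sub_apply, Module.End.mul_apply, LinearMap.mulLeft_apply,
    Derivation.coeFn_coe]
  rw [Derivation.leibniz]
  rw [derOp_mulElt]
  by_cases h : m = n
  · simp only [if_pos h, smul_eq_mul, LinearMap.smul_apply, Module.End.one_apply,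
      smul_eq_C_mul]
    ring
  · simp only [if_neg h, smul_eq_mul, LinearMap.zero_apply]
    ring

lemma mulElt_single (i : Fin d) (n : ℕ+) :
    mulElt (Pi.single i 1) n = X (i, n) := by
  rw [mulElt, Finset.sum_eq_single i]
  · simp
  · intro j _ hj; simp [Pi.single_eq_of_ne hj]
  · simp

lemma coeff_pderiv' {σ : Type*} [DecidableEq σ] (v : σ) (m : σ →₀ ℕ) (p : MvPolynomial σ ℂ) :
    coeff m (pderiv v p) = ((m v : ℂ) + 1) * coeff (m + Finsupp.single v 1) p := by
  induction p using MvPolynomial.induction_on' with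
  | monomial u a =>
    rw [pderiv_monomial, coeff_monomial, coeff_monomial]
    by_cases hu : u = m + Finsupp.single v 1
    · subst hu
      rw [if_pos (add_tsub_cancel_right _ _), if_pos rfl, Finsupp.add_apply,
        Finsupp.single_eq_same]
      push_cast
      ring
    · rw [if_neg hu]
      by_cases h2 : u - Finsupp.single v 1 = m
      · rw [if_pos h2]
        by_cases huv : u v = 0
        · simp [huv]
        · exfalso
          apply hu
          ext w
          have h3 : u w - (Finsupp.single v 1) w = m w := by
            rw [← Finsupp.tsub_apply, h2]
          rw [Finsupp.add_apply, Finsupp.single_apply]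
          rw [Finsupp.single_apply] at h3
          by_cases hw : v = w
          · subst hw
            simp at h3 ⊢
            omega
          · simp [if_neg hw] at h3 ⊢
            omega
      · rw [if_neg h2, mul_zero]
  | add p q hp hq =>
    simp [map_add, coeff_add, hp, hq]
    ring

lemma pderiv_reduce {σ : Type*} [DecidableEq σ] (p : MvPolynomial σ ℂ)
    (hp : p ≠ 0) (hd : 0 < p.totalDegree) :
    ∃ v, pderiv v p ≠ 0 ∧ (pderiv v p).totalDegree < p.totalDegree := by
  obtain ⟨m, hm, hsup⟩ := Finset.exists_mem_eq_sup p.support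
    (Finset.nonempty_iff_ne_empty.mpr (mt MvPolynomial.support_eq_empty.mp hp)) (fun s => s.sum fun _ e => e)
  have hmne : m ≠ 0 := by
    intro h0
    rw [MvPolynomial.totalDegree, hsup, h0] at hd
    simp at hd
  obtain ⟨v, hv⟩ := Finsupp.ne_iff.mp hmne
  rw [Finsupp.zero_apply] at hv
  refine ⟨v, ?_, ?_⟩
  · intro h0
    have hc : coeff (m - Finsupp.single v 1) (pderiv v p) = 0 := by rw [h0]; simp
    rw [coeff_pderiv'] at hc
    have hle : Finsupp.single v 1 ≤ m := by
      rw [Finsupp.single_le_iff]; omega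
    rw [tsub_add_cancel_of_le hle] at hc
    have : coeff m p ≠ 0 := (mem_support_iff).mp hm
    rcases mul_eq_zero.mp hc with h | h
    · exact Nat.cast_add_one_ne_zero _ h
    · exact this h
  · by_cases hq : pderiv v p = 0
    · rw [hq]; simpa using hd
    rw [MvPolynomial.totalDegree]
    apply Finset.sup_lt_iff (by simpa using hd) |>.mpr
    intro m' hm'
    have hc := (mem_support_iff).mp hm'
    rw [coeff_pderiv'] at hc
    have h2 : coeff (m' + Finsupp.single v 1) p ≠ 0 := by
      intro h; rw [h, mul_zero] at hc; exact hc rfl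
    have := MvPolynomial.le_totalDegree ((mem_support_iff).mpr h2)
    have hsum : ((m' + Finsupp.single v 1).sum fun _ e => e)
        = (m'.sum fun _ e => e) + 1 := by
      rw [Finsupp.sum_add_index' (fun _ => rfl) (fun _ _ _ => rfl)]
      simp [Finsupp.sum_single_index]
    omega

end

section
variable {d : ℕ} (B : (Fin d → ℂ) →ₗ[ℂ] (Fin d → ℂ) →ₗ[ℂ] ℂ)

lemma heis (hsymm : ∀ α β, B α β = B β α) (α β : Fin d → ℂ) (m n : ℤ) :
    A B α m * A B β n - A B β n * A B α m
      = if m + n = 0 then ((m : ℂ) * B α β) •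
          (1 : Module.End ℂ (MvPolynomial (Fin d × ℕ+) ℂ)) else 0 := by
  rcases int_cases m with hm | ⟨k, hk⟩ | ⟨k, hk⟩
  · subst hm
    rw [A_zero]
    simp only [zero_mul, mul_zero, sub_zero, Int.cast_zero, zero_smul]
    split <;> simp
  · subst hk
    rcases int_cases n with hn | ⟨l, hl⟩ | ⟨l, hl⟩
    · subst hn
      rw [A_zero]
      have h0 : ¬ ((k:ℤ) + 0 = 0) := by have := k.pos; omega
      simp [h0]
    · subst hl
      have h0 : ¬ ((k:ℤ) + (l:ℤ) = 0) := by have := k.pos; have := l.pos; omega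
      rw [if_neg h0, A_pos, A_pos]
      have hb := derOp_comm B α β k l
      have : ((⁅derOp B α k, derOp B β l⁆ : Derivation ℂ _ _) : Module.End ℂ (MvPolynomial (Fin d × ℕ+) ℂ))
          = ⁅(derOp B α k).toLinearMap, (derOp B β l).toLinearMap⁆ :=
        Derivation.commutator_coe_linear_map
      rw [hb] at this
      have h2 : (0 : Module.End ℂ (MvPolynomial (Fin d × ℕ+) ℂ))
          = ⁅(derOp B α k).toLinearMap, (derOp B β l).toLinearMap⁆ := by
        rw [← this]; rfl
      rw [Ring.lie_def] at h2
      exact h2.symm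
    · subst hl
      rw [A_pos, A_neg, der_mul_bracket]
      by_cases h : k = l
      · subst h
        rw [if_pos rfl, if_pos (by ring)]
        norm_num
      · have : ¬((k:ℤ) + -(l:ℤ) = 0) := by
          intro h0
          exact h (PNat.coe_inj.mp (by exact_mod_cast (by omega : (k:ℤ) = (l:ℤ))))
        rw [if_neg h, if_neg this]
  · subst hk
    rcases int_cases n with hn | ⟨l, hl⟩ | ⟨l, hl⟩
    · subst hn
      rw [A_zero]
      have h0 : ¬ (-(k:ℤ) + 0 = 0) := by have := k.pos; omega
      simp [h0]
    · subst hl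
      rw [A_pos, A_neg]
      have hb := der_mul_bracket B β α l k
      have hb' : LinearMap.mulLeft ℂ (mulElt α k) * (derOp B β l).toLinearMap
          - (derOp B β l).toLinearMap * LinearMap.mulLeft ℂ (mulElt α k)
          = -(if l = k then ((l : ℂ) * B β α) •
              (1 : Module.End ℂ (MvPolynomial (Fin d × ℕ+) ℂ)) else 0) := by
        rw [← hb]; exact (neg_sub _ _).symm
      rw [hb']
      by_cases h : l = k
      · subst h
        rw [if_pos rfl, if_pos (by ring)]
        rw [hsymm β α]
        push_cast
        rw [neg_mul]
        exact (neg_smul _ _).symm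
      · have : ¬(-(k:ℤ) + (l:ℤ) = 0) := by
          intro h0
          exact h (PNat.coe_inj.mp (by exact_mod_cast (by omega : (l:ℤ) = (k:ℤ))))
        rw [if_neg h, if_neg this, neg_zero]
    · subst hl
      have h0 : ¬ (-(k:ℤ) + -(l:ℤ) = 0) := by have := k.pos; have := l.pos; omega
      rw [if_neg h0, A_neg, A_neg]
      refine LinearMap.ext fun p => ?_
      simp only [LinearMap.sub_apply, Module.End.mul_apply, LinearMap.mulLeft_apply,
        LinearMap.zero_apply]
      ring

lemma derOp_eq_pderiv (hnondeg : ∀ α, (∀ β, B α β = 0) → α = 0) (v : Fin d × ℕ+) :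
    ∃ α, derOp B α v.2 = pderiv v := by
  obtain ⟨i, n⟩ := v
  set G : (Fin d → ℂ) →ₗ[ℂ] (Fin d → ℂ) := LinearMap.pi (fun j => B.flip (Pi.single j 1))
  have hGapp : ∀ α j, G α j = B α (Pi.single j 1) := fun α j => rfl
  have hinj : Function.Injective G := by
    rw [← LinearMap.ker_eq_bot, Submodule.eq_bot_iff]
    intro α hα
    apply hnondeg
    intro β
    rw [B_sum]
    refine Finset.sum_eq_zero fun j _ => ?_
    have : G α j = 0 := by rw [LinearMap.mem_ker.mp hα]; rfl
    rw [hGapp] at this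
    rw [this, mul_zero]
  have hsurj : Function.Surjective G := LinearMap.injective_iff_surjective.mp hinj
  obtain ⟨α, hα⟩ := hsurj (((n : ℂ))⁻¹ • (Pi.single i 1 : Fin d → ℂ))
  have hn0 : ((n : ℕ) : ℂ) ≠ 0 := Nat.cast_ne_zero.mpr n.pos.ne'
  refine ⟨α, ?_⟩
  apply derivation_ext
  rintro ⟨j, m⟩
  rw [derOp_X]
  have hBα : ∀ j', B α (Pi.single j' 1) = ((n : ℂ))⁻¹ * (Pi.single i 1 : Fin d → ℂ) j' := by
    intro j'
    rw [← hGapp, hα]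
    simp
  by_cases hm : n = m
  · subst hm
    rw [if_pos rfl, hBα]
    have : (n : ℂ) * (((n : ℂ))⁻¹ * (Pi.single i 1 : Fin d → ℂ) j) = (Pi.single i 1 : Fin d → ℂ) j := by
      field_simp
    rw [this]
    rw [pderiv_X]
    by_cases hj : j = i
    · subst hj
      simp [Pi.single_apply]
    · rw [Pi.single_apply, Pi.single_apply, if_neg (by simp [hj]), if_neg (by simp [hj])]
      simp
  · rw [if_neg hm, pderiv_X, Pi.single_apply,
      if_neg (by simp [Prod.ext_iff]; intro _; exact fun h => (hm h.symm).elim)]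

end

section
variable {d : ℕ} (B : (Fin d → ℂ) →ₗ[ℂ] (Fin d → ℂ) →ₗ[ℂ] ℂ)

lemma A_add (α β : Fin d → ℂ) (n : ℤ) : A B (α + β) n = A B α n + A B β n := by
  rcases int_cases n with h | ⟨k, h⟩ | ⟨k, h⟩ <;> subst h
  · simp [A_zero]
  · rw [A_pos, A_pos, A_pos, derOp_add]; rfl
  · rw [A_neg, A_neg, A_neg, mulElt_add]
    refine LinearMap.ext fun p => ?_
    simp [add_mul]

lemma A_smul (c : ℂ) (α : Fin d → ℂ) (n : ℤ) : A B (c • α) n = c • A B α n := by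
  rcases int_cases n with h | ⟨k, h⟩ | ⟨k, h⟩ <;> subst h
  · simp [A_zero]
  · rw [A_pos, A_pos, derOp_smul]; rfl
  · rw [A_neg, A_neg, mulElt_smul]
    refine LinearMap.ext fun p => ?_
    simp [smul_mul_assoc]

end

lemma one_mem_of_const {σ : Type*} [DecidableEq σ] {S : Submodule ℂ (MvPolynomial σ ℂ)}
    {p : MvPolynomial σ ℂ} (hpS : p ∈ S) (hp : p ≠ 0) (hd0 : p.totalDegree = 0) :
    (1 : MvPolynomial σ ℂ) ∈ S := by
  set c := coeff 0 p with hc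
  have hC : p = C c := by
    ext m
    by_cases hm : m = 0
    · subst hm; simp [hc]
    · rw [coeff_C, if_neg (fun h => hm h.symm)]
      by_contra hcc
      have hmem : m ∈ p.support := mem_support_iff.mpr hcc
      have := (totalDegree_eq_zero_iff _ p).mp hd0 m hmem
      exact hm (Finsupp.ext this)
  have hc0 : c ≠ 0 := by
    intro h; apply hp; rw [hC, h, map_zero]
  have h1 : (1 : MvPolynomial σ ℂ) = c⁻¹ • p := by
    rw [hC, smul_eq_C_mul, ← C_mul, inv_mul_cancel₀ hc0, C_1]
  rw [h1]
  exact S.smul_mem _ hpS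

theorem main (d : ℕ)
    (B : (Fin d → ℂ) →ₗ[ℂ] (Fin d → ℂ) →ₗ[ℂ] ℂ)
    (hsymm : ∀ α β, B α β = B β α)
    (hnondeg : ∀ α, (∀ β, B α β = 0) → α = 0) :
    ∃ A : (Fin d → ℂ) → ℤ → Module.End ℂ (MvPolynomial (Fin d × ℕ+) ℂ),
      (∀ α β n, A (α + β) n = A α n + A β n) ∧
      (∀ (c : ℂ) α n, A (c • α) n = c • A α n) ∧
      (∀ α (n : ℕ+) p, A α (-(n : ℤ)) p =
          (∑ i, α i • MvPolynomial.X (i, n)) * p) ∧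
      (∀ α (n : ℕ+) p q, A α (n : ℤ) (p * q)
          = A α (n : ℤ) p * q + p * A α (n : ℤ) q) ∧
      (∀ α (n : ℕ+) i (m : ℕ+), A α (n : ℤ) (MvPolynomial.X (i, m))
          = if n = m then MvPolynomial.C ((n : ℂ) * B α (Pi.single i 1)) else 0) ∧
      (∀ α, A α 0 = 0) ∧
      (∀ α β (m n : ℤ), A α m * A β n - A β n * A α m
          = if m + n = 0 then ((m : ℂ) * B α β) •
              (1 : Module.End ℂ (MvPolynomial (Fin d × ℕ+) ℂ)) else 0) ∧
      (∀ S : Submodule ℂ (MvPolynomial (Fin d × ℕ+) ℂ),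
        (∀ α (n : ℤ), ∀ p ∈ S, A α n p ∈ S) → S ≠ ⊥ → S = ⊤) := by
  refine ⟨A B, A_add B, A_smul B, ?_, ?_, ?_, A_zero B, heis B hsymm, ?_⟩
  · intro α n p
    rw [A_neg]
    rfl
  · intro α n p q
    rw [A_pos]
    simp only [Derivation.coeFn_coe]
    rw [Derivation.leibniz]
    simp only [smul_eq_mul]
    ring
  · intro α n i m
    rw [A_pos]
    exact derOp_X B α n i m
  · intro S hS hne
    -- closure under partial derivatives
    have hpd : ∀ v : Fin d × ℕ+, ∀ p ∈ S, pderiv v p ∈ S := by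
      intro v p hp
      obtain ⟨α, hα⟩ := derOp_eq_pderiv B hnondeg v
      have := hS α ((v.2 : ℕ+) : ℤ) p hp
      rw [A_pos, hα] at this
      exact this
    -- 1 ∈ S
    have hone : (1 : MvPolynomial (Fin d × ℕ+) ℂ) ∈ S := by
      obtain ⟨p0, hp0S, hp0⟩ := (Submodule.ne_bot_iff S).mp hne
      have key : ∀ N : ℕ, ∀ p : MvPolynomial (Fin d × ℕ+) ℂ, p ∈ S → p ≠ 0 →
          p.totalDegree ≤ N → (1 : MvPolynomial (Fin d × ℕ+) ℂ) ∈ S := by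
        intro N
        induction N with
        | zero =>
          intro p hpS hp hdeg
          exact one_mem_of_const hpS hp (Nat.le_zero.mp hdeg)
        | succ N ih =>
          intro p hpS hp hdeg
          by_cases hd0 : p.totalDegree = 0
          · exact one_mem_of_const hpS hp hd0
          · obtain ⟨v, hq0, hqd⟩ := pderiv_reduce p hp (Nat.pos_of_ne_zero hd0)
            exact ih (pderiv v p) (hpd v p hpS) hq0 (by omega)
      exact key p0.totalDegree p0 hp0S hp0 le_rfl
    -- conclude S = ⊤
    rw [eq_top_iff]
    rintro p -
    induction p using MvPolynomial.induction_on with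
    | C a =>
      have : (C a : MvPolynomial (Fin d × ℕ+) ℂ) = a • 1 := by
        rw [smul_eq_C_mul, mul_one]
      rw [this]
      exact S.smul_mem _ hone
    | add p q hp hq => exact S.add_mem hp hq
    | mul_X p v hp =>
      have hm := hS (Pi.single v.1 1) (-(v.2 : ℤ)) p hp
      rw [A_neg] at hm
      have : LinearMap.mulLeft ℂ (mulElt (Pi.single v.1 1) v.2) p = X v * p := by
        rw [LinearMap.mulLeft_apply, mulElt_single]
      rw [this] at hm
      rwa [mul_comm] at hm

end Stmt11Aux

/-- Heisenberg operators on the symmetric algebra `S(𝔥̂_ℤ⁻)`, realized as the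
polynomial algebra on generators `X_(i,n)` (`e_i ⊗ t^{-n}`, `n > 0`) where
`𝔥 = ℂ^d` carries a nondegenerate symmetric bilinear form `B`.  There exist
operators `α(n)` (`α ∈ 𝔥`, `n ∈ ℤ`), linear in `α`, with `α(-n)` (`n > 0`) acting
by multiplication, `α(n)` (`n > 0`) acting as the derivation determined by
`α(n)·(β ⊗ t^{-m}) = n⟨α,β⟩δ_{n,m}`, and `α(0) = 0`; they satisfy the Heisenberg
relations `[α(m), β(n)] = m⟨α,β⟩δ_{m+n,0}·1`, and the module is irreducible. -/
theorem stmt_11 (d : ℕ)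
    (B : (Fin d → ℂ) →ₗ[ℂ] (Fin d → ℂ) →ₗ[ℂ] ℂ)
    (hsymm : ∀ α β, B α β = B β α)
    (hnondeg : ∀ α, (∀ β, B α β = 0) → α = 0) :
    ∃ A : (Fin d → ℂ) → ℤ → Module.End ℂ (MvPolynomial (Fin d × ℕ+) ℂ),
      (∀ α β n, A (α + β) n = A α n + A β n) ∧
      (∀ (c : ℂ) α n, A (c • α) n = c • A α n) ∧
      -- creation operators act by multiplication
      (∀ α (n : ℕ+) p, A α (-(n : ℤ)) p =
          (∑ i, α i • MvPolynomial.X (i, n)) * p) ∧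
      -- annihilation operators are derivations determined by the pairing
      (∀ α (n : ℕ+) p q, A α (n : ℤ) (p * q)
          = A α (n : ℤ) p * q + p * A α (n : ℤ) q) ∧
      (∀ α (n : ℕ+) i (m : ℕ+), A α (n : ℤ) (MvPolynomial.X (i, m))
          = if n = m then MvPolynomial.C ((n : ℂ) * B α (Pi.single i 1)) else 0) ∧
      (∀ α, A α 0 = 0) ∧
      -- the Heisenberg relations
      (∀ α β (m n : ℤ), A α m * A β n - A β n * A α m
          = if m + n = 0 then ((m : ℂ) * B α β) •
              (1 : Module.End ℂ (MvPolynomial (Fin d × ℕ+) ℂ)) else 0) ∧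
      -- irreducibility
      (∀ S : Submodule ℂ (MvPolynomial (Fin d × ℕ+) ℂ),
        (∀ α (n : ℤ), ∀ p ∈ S, A α n p ∈ S) → S ≠ ⊥ → S = ⊤) :=
  Stmt11Aux.main d B hsymm hnondeg
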